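/- Let n be a positive odd integer, let d be a nonzero rational number, and let x be a p-adic integer (for an odd prime p). Then the following chain of identities holds in ℚ_p: ∑_{k=0}^{(n−1)/2} (x² + x − (1+4d)k² − (1−2d)k) · d^{−k} C(x,k)C(x+k,k)/C(2k,k) = −d(n+1) + ((n+1)/2)·∑_{k=0}^{(n−1)/2} (x² + x + 2d − (1+4d)k² − (1+2d)k) · d^{−k} C(x,k)C(x+k,k)/((k+1)C(2k,k)) = n·∑_{k=0}^{(n−1)/2} (x² + x − (1+4d)k² − (1+2d)k) · d^{−k} C(x,k)C(x+k,k)/((2k+1)C(2k,k)). -/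

import Mathlib

/-- Generalized binomial coefficient `C(x, k) = x(x-1)⋯(x-k+1)/k!` in `ℚ_[p]`. -/
noncomputable def gbinom (p : ℕ) [Fact p.Prime] (x : ℚ_[p]) (k : ℕ) : ℚ_[p] :=
  (∏ i ∈ Finset.range k, (x - (i : ℚ_[p]))) / (k.factorial : ℚ_[p])

noncomputable def gaux (p : ℕ) [Fact p.Prime] (d : ℚ) (X : ℚ_[p]) (k : ℕ) : ℚ_[p] :=
  (d : ℚ_[p]) ^ (-(k : ℤ)) * gbinom p X k * gbinom p (X + (k : ℚ_[p])) k
    / (((2 * k).choose k : ℕ) : ℚ_[p])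

lemma gaux_zero (p : ℕ) [Fact p.Prime] (d : ℚ) (X : ℚ_[p]) : gaux p d X 0 = 1 := by
  simp [gaux, gbinom]

lemma gaux_key (p : ℕ) [Fact p.Prime] (d : ℚ) (hd0 : d ≠ 0) (X : ℚ_[p]) (k : ℕ) :
    gaux p d X (k + 1) * (2 * (d : ℚ_[p]) * ((k : ℚ_[p]) + 1) * (2 * (k : ℚ_[p]) + 1)) =
      gaux p d X k * (X ^ 2 + X - (k : ℚ_[p]) ^ 2 - (k : ℚ_[p])) := by
  have hd : (d : ℚ_[p]) ≠ 0 := Rat.cast_ne_zero.mpr hd0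
  have hk1 : ((k : ℚ_[p]) + 1) ≠ 0 := by
    have : (((k + 1 : ℕ)) : ℚ_[p]) ≠ 0 := Nat.cast_ne_zero.mpr (Nat.succ_ne_zero k)
    push_cast at this; exact this
  have h2k1 : (2 * (k : ℚ_[p]) + 1) ≠ 0 := by
    have : (((2 * k + 1 : ℕ)) : ℚ_[p]) ≠ 0 := Nat.cast_ne_zero.mpr (by omega)
    push_cast at this; exact this
  have hC : ((((2 * k).choose k : ℕ)) : ℚ_[p]) ≠ 0 :=
    Nat.cast_ne_zero.mpr (Nat.choose_pos (by omega)).ne'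
  have hC1 : ((((2 * (k + 1)).choose (k + 1) : ℕ)) : ℚ_[p]) ≠ 0 :=
    Nat.cast_ne_zero.mpr (Nat.choose_pos (by omega)).ne'
  have hfac : ((k.factorial : ℕ) : ℚ_[p]) ≠ 0 :=
    Nat.cast_ne_zero.mpr k.factorial_ne_zero
  have hzk : (d : ℚ_[p]) ^ (-(k : ℤ)) ≠ 0 := zpow_ne_zero _ hd
  have hCrel : (((k + 1 : ℕ)) : ℚ_[p]) * ((((2 * (k + 1)).choose (k + 1) : ℕ)) : ℚ_[p]) =
      2 * (2 * (k : ℚ_[p]) + 1) * ((((2 * k).choose k : ℕ)) : ℚ_[p]) := by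
    have h := Nat.succ_mul_centralBinom_succ k
    simp only [Nat.centralBinom] at h
    exact_mod_cast h
  have hz : (d : ℚ_[p]) ^ (-((k + 1 : ℕ) : ℤ)) = (d : ℚ_[p]) ^ (-(k : ℤ)) * (d : ℚ_[p])⁻¹ := by
    push_cast
    rw [neg_add, zpow_add₀ hd, zpow_neg_one]
  have hshift : (∏ i ∈ Finset.range (k + 1), (X + ((k + 1 : ℕ) : ℚ_[p]) - (i : ℚ_[p]))) =
      (X + (k : ℚ_[p]) + 1) * ∏ i ∈ Finset.range k, (X + (k : ℚ_[p]) - (i : ℚ_[p])) := by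
    rw [Finset.prod_range_succ']
    have : ∀ i ∈ Finset.range k,
        (X + ((k + 1 : ℕ) : ℚ_[p]) - ((i + 1 : ℕ) : ℚ_[p])) = (X + (k : ℚ_[p]) - (i : ℚ_[p])) := by
      intro i _; push_cast; ring
    rw [Finset.prod_congr rfl this]
    push_cast; ring
  simp only [gaux, gbinom, Nat.factorial_succ, hz]
  rw [show (∏ i ∈ Finset.range (k+1), (X - (i:ℚ_[p]))) =
      (∏ i ∈ Finset.range k, (X - (i:ℚ_[p]))) * (X - (k:ℚ_[p])) from Finset.prod_range_succ _ _,
    hshift]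
  have hC1e : ((((2 * (k + 1)).choose (k + 1) : ℕ)) : ℚ_[p]) =
      2 * (2 * (k : ℚ_[p]) + 1) * ((((2 * k).choose k : ℕ)) : ℚ_[p]) / ((k : ℚ_[p]) + 1) := by
    rw [eq_div_iff hk1]
    push_cast at hCrel ⊢
    linear_combination hCrel
  rw [hC1e]
  set A := (d : ℚ_[p]) ^ (-(k : ℤ)) with hA
  have hC' : (2 * k).choose k ≠ 0 := (Nat.choose_pos (by omega)).ne'
  have hC'' : (k * 2).choose k ≠ 0 := (Nat.choose_pos (by omega)).ne'
  push_cast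
  field_simp
  rw [div_eq_iff (by simp [mul_eq_zero, hd, hk1, hfac, h2k1, hC', hC'', show (k : ℚ_[p]) * 2 + 1 ≠ 0 by rw [mul_comm]; exact h2k1])]
  ring

lemma sum1 (p : ℕ) [Fact p.Prime] (d : ℚ) (hd0 : d ≠ 0) (X : ℚ_[p]) (m : ℕ) :
    (∑ k ∈ Finset.range (m + 1),
        (X ^ 2 + X - (1 + 4 * (d : ℚ_[p])) * (k : ℚ_[p]) ^ 2
            - (1 - 2 * (d : ℚ_[p])) * (k : ℚ_[p])) *
          ((d : ℚ_[p]) ^ (-(k : ℤ)) * gbinom p X k * gbinom p (X + (k : ℚ_[p])) k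
            / (((2 * k).choose k : ℕ) : ℚ_[p]))) =
      2 * (d : ℚ_[p]) * ((m : ℚ_[p]) + 1) * (2 * (m : ℚ_[p]) + 1) * gaux p d X (m + 1) := by
  have h : ∀ k ∈ Finset.range (m + 1),
      (X ^ 2 + X - (1 + 4 * (d : ℚ_[p])) * (k : ℚ_[p]) ^ 2
          - (1 - 2 * (d : ℚ_[p])) * (k : ℚ_[p])) *
        ((d : ℚ_[p]) ^ (-(k : ℤ)) * gbinom p X k * gbinom p (X + (k : ℚ_[p])) k
          / (((2 * k).choose k : ℕ) : ℚ_[p])) =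
      (fun k : ℕ => 2 * (d : ℚ_[p]) * (k : ℚ_[p]) * (2 * (k : ℚ_[p]) - 1) * gaux p d X k) (k + 1)
        - (fun k : ℕ => 2 * (d : ℚ_[p]) * (k : ℚ_[p]) * (2 * (k : ℚ_[p]) - 1) * gaux p d X k) k := by
    intro k _
    have key := gaux_key p d hd0 X k
    show _ = 2 * (d : ℚ_[p]) * ((k + 1 : ℕ) : ℚ_[p]) * (2 * ((k + 1 : ℕ) : ℚ_[p]) - 1) *
        gaux p d X (k + 1) - 2 * (d : ℚ_[p]) * (k : ℚ_[p]) * (2 * (k : ℚ_[p]) - 1) * gaux p d X k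
    rw [show (d : ℚ_[p]) ^ (-(k : ℤ)) * gbinom p X k * gbinom p (X + (k : ℚ_[p])) k
        / (((2 * k).choose k : ℕ) : ℚ_[p]) = gaux p d X k from rfl]
    push_cast
    linear_combination -key
  rw [Finset.sum_congr rfl h]
  refine (Finset.sum_range_sub
    (fun k : ℕ => 2 * (d : ℚ_[p]) * (k : ℚ_[p]) * (2 * (k : ℚ_[p]) - 1) * gaux p d X k)
    (m + 1)).trans ?_
  push_cast
  ring

lemma sum2 (p : ℕ) [Fact p.Prime] (d : ℚ) (hd0 : d ≠ 0) (X : ℚ_[p]) (m : ℕ) :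
    (∑ k ∈ Finset.range (m + 1),
        (X ^ 2 + X + 2 * (d : ℚ_[p]) - (1 + 4 * (d : ℚ_[p])) * (k : ℚ_[p]) ^ 2
            - (1 + 2 * (d : ℚ_[p])) * (k : ℚ_[p])) *
          ((d : ℚ_[p]) ^ (-(k : ℤ)) * gbinom p X k * gbinom p (X + (k : ℚ_[p])) k
            / (((k : ℚ_[p]) + 1) * (((2 * k).choose k : ℕ) : ℚ_[p])))) =
      2 * (d : ℚ_[p]) * (2 * (m : ℚ_[p]) + 1) * gaux p d X (m + 1) + 2 * (d : ℚ_[p]) := by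
  have h : ∀ k ∈ Finset.range (m + 1),
      (X ^ 2 + X + 2 * (d : ℚ_[p]) - (1 + 4 * (d : ℚ_[p])) * (k : ℚ_[p]) ^ 2
          - (1 + 2 * (d : ℚ_[p])) * (k : ℚ_[p])) *
        ((d : ℚ_[p]) ^ (-(k : ℤ)) * gbinom p X k * gbinom p (X + (k : ℚ_[p])) k
          / (((k : ℚ_[p]) + 1) * (((2 * k).choose k : ℕ) : ℚ_[p]))) =
      (fun k : ℕ => 2 * (d : ℚ_[p]) * (2 * (k : ℚ_[p]) - 1) * gaux p d X k) (k + 1)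
        - (fun k : ℕ => 2 * (d : ℚ_[p]) * (2 * (k : ℚ_[p]) - 1) * gaux p d X k) k := by
    intro k _
    have key := gaux_key p d hd0 X k
    have hk1 : ((k : ℚ_[p]) + 1) ≠ 0 := by
      have : (((k + 1 : ℕ)) : ℚ_[p]) ≠ 0 := Nat.cast_ne_zero.mpr (Nat.succ_ne_zero k)
      push_cast at this; exact this
    show _ = 2 * (d : ℚ_[p]) * (2 * ((k + 1 : ℕ) : ℚ_[p]) - 1) * gaux p d X (k + 1)
        - 2 * (d : ℚ_[p]) * (2 * (k : ℚ_[p]) - 1) * gaux p d X k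
    rw [show (d : ℚ_[p]) ^ (-(k : ℤ)) * gbinom p X k * gbinom p (X + (k : ℚ_[p])) k
        / (((k : ℚ_[p]) + 1) * (((2 * k).choose k : ℕ) : ℚ_[p]))
        = gaux p d X k / ((k : ℚ_[p]) + 1) from by
      rw [gaux, div_div, mul_comm ((((2 * k).choose k : ℕ)) : ℚ_[p])]]
    rw [← mul_div_assoc, div_eq_iff hk1]
    push_cast
    linear_combination -key
  rw [Finset.sum_congr rfl h]
  refine (Finset.sum_range_sub
    (fun k : ℕ => 2 * (d : ℚ_[p]) * (2 * (k : ℚ_[p]) - 1) * gaux p d X k) (m + 1)).trans ?_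
  rw [gaux_zero]
  push_cast
  ring

lemma sum3 (p : ℕ) [Fact p.Prime] (d : ℚ) (hd0 : d ≠ 0) (X : ℚ_[p]) (m : ℕ) :
    (∑ k ∈ Finset.range (m + 1),
        (X ^ 2 + X - (1 + 4 * (d : ℚ_[p])) * (k : ℚ_[p]) ^ 2
            - (1 + 2 * (d : ℚ_[p])) * (k : ℚ_[p])) *
          ((d : ℚ_[p]) ^ (-(k : ℤ)) * gbinom p X k * gbinom p (X + (k : ℚ_[p])) k
            / ((2 * (k : ℚ_[p]) + 1) * (((2 * k).choose k : ℕ) : ℚ_[p])))) =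
      2 * (d : ℚ_[p]) * ((m : ℚ_[p]) + 1) * gaux p d X (m + 1) := by
  have h : ∀ k ∈ Finset.range (m + 1),
      (X ^ 2 + X - (1 + 4 * (d : ℚ_[p])) * (k : ℚ_[p]) ^ 2
          - (1 + 2 * (d : ℚ_[p])) * (k : ℚ_[p])) *
        ((d : ℚ_[p]) ^ (-(k : ℤ)) * gbinom p X k * gbinom p (X + (k : ℚ_[p])) k
          / ((2 * (k : ℚ_[p]) + 1) * (((2 * k).choose k : ℕ) : ℚ_[p]))) =
      (fun k : ℕ => 2 * (d : ℚ_[p]) * (k : ℚ_[p]) * gaux p d X k) (k + 1)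
        - (fun k : ℕ => 2 * (d : ℚ_[p]) * (k : ℚ_[p]) * gaux p d X k) k := by
    intro k _
    have key := gaux_key p d hd0 X k
    have h2k1 : (2 * (k : ℚ_[p]) + 1) ≠ 0 := by
      have : (((2 * k + 1 : ℕ)) : ℚ_[p]) ≠ 0 := Nat.cast_ne_zero.mpr (by omega)
      push_cast at this; exact this
    show _ = 2 * (d : ℚ_[p]) * ((k + 1 : ℕ) : ℚ_[p]) * gaux p d X (k + 1)
        - 2 * (d : ℚ_[p]) * (k : ℚ_[p]) * gaux p d X k
    rw [show (d : ℚ_[p]) ^ (-(k : ℤ)) * gbinom p X k * gbinom p (X + (k : ℚ_[p])) k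
        / ((2 * (k : ℚ_[p]) + 1) * (((2 * k).choose k : ℕ) : ℚ_[p]))
        = gaux p d X k / (2 * (k : ℚ_[p]) + 1) from by
      rw [gaux, div_div, mul_comm ((((2 * k).choose k : ℕ)) : ℚ_[p])]]
    rw [← mul_div_assoc, div_eq_iff h2k1]
    push_cast
    linear_combination -key
  rw [Finset.sum_congr rfl h]
  refine (Finset.sum_range_sub
    (fun k : ℕ => 2 * (d : ℚ_[p]) * (k : ℚ_[p]) * gaux p d X k) (m + 1)).trans ?_
  push_cast
  ring

theorem stmt13 (p : ℕ) [Fact p.Prime] (hp : Odd p)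
    (n : ℕ) (hn : 0 < n) (hodd : Odd n) (d : ℚ) (hd0 : d ≠ 0) (x : ℤ_[p]) :
    (∑ k ∈ Finset.range ((n - 1) / 2 + 1),
        ((x : ℚ_[p]) ^ 2 + (x : ℚ_[p]) - (1 + 4 * (d : ℚ_[p])) * (k : ℚ_[p]) ^ 2
            - (1 - 2 * (d : ℚ_[p])) * (k : ℚ_[p])) *
          ((d : ℚ_[p]) ^ (-(k : ℤ)) * gbinom p (x : ℚ_[p]) k * gbinom p ((x : ℚ_[p]) + (k : ℚ_[p])) k
            / (((2 * k).choose k : ℕ) : ℚ_[p]))) =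
      -(d : ℚ_[p]) * ((n : ℚ_[p]) + 1) + (((n : ℚ_[p]) + 1) / 2) *
        ∑ k ∈ Finset.range ((n - 1) / 2 + 1),
          ((x : ℚ_[p]) ^ 2 + (x : ℚ_[p]) + 2 * (d : ℚ_[p])
              - (1 + 4 * (d : ℚ_[p])) * (k : ℚ_[p]) ^ 2
              - (1 + 2 * (d : ℚ_[p])) * (k : ℚ_[p])) *
            ((d : ℚ_[p]) ^ (-(k : ℤ)) * gbinom p (x : ℚ_[p]) k *
                gbinom p ((x : ℚ_[p]) + (k : ℚ_[p])) k
              / (((k : ℚ_[p]) + 1) * (((2 * k).choose k : ℕ) : ℚ_[p]))) ∧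
    -(d : ℚ_[p]) * ((n : ℚ_[p]) + 1) + (((n : ℚ_[p]) + 1) / 2) *
        (∑ k ∈ Finset.range ((n - 1) / 2 + 1),
          ((x : ℚ_[p]) ^ 2 + (x : ℚ_[p]) + 2 * (d : ℚ_[p])
              - (1 + 4 * (d : ℚ_[p])) * (k : ℚ_[p]) ^ 2
              - (1 + 2 * (d : ℚ_[p])) * (k : ℚ_[p])) *
            ((d : ℚ_[p]) ^ (-(k : ℤ)) * gbinom p (x : ℚ_[p]) k *
                gbinom p ((x : ℚ_[p]) + (k : ℚ_[p])) k
              / (((k : ℚ_[p]) + 1) * (((2 * k).choose k : ℕ) : ℚ_[p])))) =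
      (n : ℚ_[p]) *
        ∑ k ∈ Finset.range ((n - 1) / 2 + 1),
          ((x : ℚ_[p]) ^ 2 + (x : ℚ_[p]) - (1 + 4 * (d : ℚ_[p])) * (k : ℚ_[p]) ^ 2
              - (1 + 2 * (d : ℚ_[p])) * (k : ℚ_[p])) *
            ((d : ℚ_[p]) ^ (-(k : ℤ)) * gbinom p (x : ℚ_[p]) k *
                gbinom p ((x : ℚ_[p]) + (k : ℚ_[p])) k
              / ((2 * (k : ℚ_[p]) + 1) * (((2 * k).choose k : ℕ) : ℚ_[p])))  := by
  obtain ⟨m, hm⟩ := hodd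
  have hm' : (n - 1) / 2 = m := by omega
  have hncast : (n : ℚ_[p]) = 2 * (m : ℚ_[p]) + 1 := by rw [hm]; push_cast; ring
  rw [hm', hncast, sum1 p d hd0 (x : ℚ_[p]) m, sum2 p d hd0 (x : ℚ_[p]) m,
    sum3 p d hd0 (x : ℚ_[p]) m]
  constructor <;> ring
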